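/- Let G be a simple undirected graph on vertex set V = {1,…,N}, L a real N×N matrix, β ∈ ℝ, and let H ⊆ V be a coalition of honest-but-curious agents. Fix a target agent i ∉ H and suppose i has a neighbor l ∈ N_i with l ∉ H (and l ≠ i). Let φ be a real N×N matrix supported on the edges of G, let m = (φᵀ − φ)·1, let x : [0,∞) → ℝ^N be differentiable, and let x̂ : [0,∞) → ℝ^N be differentiable with x̂'(t) = x'(t) − β·L·x̂(t) for all t ≥ 0 and x̂(0) = x(0) + m. Then for every r ∈ ℝ, letting x̃(t) = x(t) + r·e_i − r·e_l, φ' = φ + r·E_{il}, and m' = (φ'ᵀ − φ')·1, the following hold: (a) x̃(t) + m' = x(t) + m for all t ≥ 0; (b) x̃_h(t) = x_h(t) for every h ∈ H and all t ≥ 0; (c) φ'_{hj} = φ_{hj} and φ'_{jh} = φ_{jh} for every h ∈ H and every j (all offsets on edges incident to coalition members are unchanged); (d) x̂ satisfies x̂'(t) = x̃'(t) − β·L·x̂(t) with x̂(0) = x̃(0) + m'; and (e) x̃_i(t) = x_i(t) + r for all t ≥ 0. Consequently, the coalition H cannot uniquely identify the reference trajectory x_i(t) of the target agent i. -/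

import Mathlib

open Matrix

/-- Theorem 3: privacy against an honest-but-curious coalition `H`.
If the target agent `i ∉ H` has a non-colluding neighbor `l`, then for every `r ∈ ℝ`
the alternative execution with references `x̃ = x + r·e_i − r·e_l` and offsets
`φ' = φ + r·E_{il}` (mask `m' = (φ'ᵀ − φ')·1`) (a) yields the same masked
references, (b) leaves the references of all coalition members unchanged, (c) leaves
all offsets on edges incident to coalition members unchanged, (d) is compatible with
the same estimate trajectory `xhat`, and (e) shifts the target's reference by `r`;
hence the coalition cannot uniquely identify `x_i(t)`. -/
theorem honest_but_curious_cannot_identify_reference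
    (N : ℕ) (G : SimpleGraph (Fin N)) [DecidableRel G.Adj]
    (L : Matrix (Fin N) (Fin N) ℝ) (β : ℝ)
    (H : Set (Fin N)) (i l : Fin N)
    (hiH : i ∉ H) (hlH : l ∉ H) (hadj : G.Adj i l)
    (φ : Matrix (Fin N) (Fin N) ℝ)
    (hφ : ∀ a b, (¬ G.Adj a b ∨ a = b) → φ a b = 0)
    (m : Fin N → ℝ) (hm : m = (φ.transpose - φ) *ᵥ (fun _ => (1 : ℝ)))
    (x : ℝ → Fin N → ℝ) (hx : Differentiable ℝ x)
    (xhat : ℝ → Fin N → ℝ)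
    (hode : ∀ t ≥ (0 : ℝ), HasDerivAt xhat (deriv x t - β • (L *ᵥ xhat t)) t)
    (hinit : xhat 0 = x 0 + m) :
    ∀ r : ℝ,
      ∀ xt : ℝ → Fin N → ℝ,
        xt = (fun t => x t + Pi.single i r - Pi.single l r) →
      ∀ φ' : Matrix (Fin N) (Fin N) ℝ,
        φ' = φ + Matrix.single i l r →
      ∀ m' : Fin N → ℝ,
        m' = (φ'.transpose - φ') *ᵥ (fun _ => (1 : ℝ)) →
      (∀ t ≥ (0 : ℝ), xt t + m' = x t + m) ∧
      (∀ h ∈ H, ∀ t ≥ (0 : ℝ), xt t h = x t h) ∧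
      (∀ h ∈ H, ∀ j : Fin N, φ' h j = φ h j ∧ φ' j h = φ j h) ∧
      ((∀ t ≥ (0 : ℝ), HasDerivAt xhat (deriv xt t - β • (L *ᵥ xhat t)) t) ∧
        xhat 0 = xt 0 + m') ∧
      (∀ t ≥ (0 : ℝ), xt t i = x t i + r) := by

  intro r xt hxt φ' hφ' m' hm'
  have hil : i ≠ l := hadj.ne
  have hm'eq : m' = m + Pi.single l r - Pi.single i r := by
    subst hm' hφ' hm
    funext k
    simp only [Matrix.transpose_add, Matrix.add_apply, mulVec, dotProduct,
      Matrix.sub_apply, Matrix.transpose_apply, Pi.sub_apply, Pi.add_apply,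
      Matrix.single, Matrix.of_apply, mul_one, add_sub_add_comm,
      Finset.sum_add_distrib, Finset.sum_sub_distrib]
    by_cases hk1 : l = k <;> by_cases hk2 : i = k <;>
      simp [hk1, hk2, Pi.single_apply, Finset.sum_ite_eq, eq_comm, hil] <;> ring
  have hisl : ∀ h ∈ H, h ≠ i ∧ h ≠ l := fun h hh =>
    ⟨fun e => hiH (e ▸ hh), fun e => hlH (e ▸ hh)⟩
  have ha : ∀ t ≥ (0:ℝ), xt t + m' = x t + m := by
    intro t _
    rw [hxt, hm'eq]
    ext k
    simp only [Pi.add_apply, Pi.sub_apply]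
    ring
  refine ⟨ha, ?_, ?_, ⟨?_, ?_⟩, ?_⟩
  · intro h hh t _
    obtain ⟨h1, h2⟩ := hisl h hh
    simp [hxt, Pi.single_eq_of_ne h1, Pi.single_eq_of_ne h2]
  · intro h hh j
    obtain ⟨h1, h2⟩ := hisl h hh
    constructor
    · rw [hφ', Matrix.add_apply,
        Matrix.single_apply_of_ne _ _ _ _ _ (fun hc => h1 hc.1.symm), add_zero]
    · rw [hφ', Matrix.add_apply,
        Matrix.single_apply_of_ne _ _ _ _ _ (fun hc => h2 hc.2.symm), add_zero]
  · intro t ht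
    have : deriv xt t = deriv x t := by
      rw [hxt]
      simp only [add_sub_assoc]
      exact deriv_add_const _
    rw [this]; exact hode t ht
  · rw [hinit, ← ha 0 le_rfl]
  · intro t _
    simp [hxt, Pi.single_eq_of_ne hil]
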